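/- arXiv:1910.04813 — 2 statements merged into one kernel-verified Lean document; each statement's English description precedes it below -/
import Mathlib

section
/- Let σ be a permutation of size n and k a positive integer. Then the number of internal insertion sequences of length k for σ satisfies |I(σ)|^k ≤ |𝒥(σ,k)| ≤ (|I(σ)| + 2nk + k²)^k. -/
open Equiv

/-- Insertion of the point `(i, j)` into a permutation `σ` of size `n`:
the resulting permutation of size `n+1` sends `i ↦ j`, and points of `σ`
in columns `≥ i` are shifted right by one, points in rows `≥ j` up by one. -/
def insertPt {n : ℕ} (σ : Equiv.Perm (Fin n)) (i j : Fin (n + 1)) :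
    Equiv.Perm (Fin (n + 1)) :=
  (finSuccEquiv' i).trans ((Equiv.optionCongr σ).trans (finSuccEquiv' j).symm)

/-- Deletion of the point `(i, σ i)` from a permutation `σ` of size `m+1`:
the remaining points are shifted left/down to form a permutation of size `m`. -/
def deletePt {m : ℕ} (σ : Equiv.Perm (Fin (m + 1))) (i : Fin (m + 1)) :
    Equiv.Perm (Fin m) :=
  Equiv.removeNone ((finSuccEquiv' i).symm.trans (σ.trans (finSuccEquiv' (σ i))))

/-- The point `(a, τ a)` of `τ` is a record (external point): a left-to-right
minimum or maximum, or a right-to-left minimum or maximum. -/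
def IsRecord {m : ℕ} (τ : Equiv.Perm (Fin m)) (a : Fin m) : Prop :=
  (∀ b, b < a → τ b < τ a) ∨ (∀ b, b < a → τ a < τ b) ∨
  (∀ b, a < b → τ b < τ a) ∨ (∀ b, a < b → τ a < τ b)

open Classical in
/-- The set `I(σ)` of internal insertions for `σ`: pairs `(i,j)` such that the
inserted point is not a record of `insertPt σ i j`. -/
noncomputable def internalInsertions {n : ℕ} (σ : Equiv.Perm (Fin n)) :
    Finset (Fin (n + 1) × Fin (n + 1)) :=
  Finset.univ.filter fun p => ¬ IsRecord (insertPt σ p.1 p.2) p.1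

open Classical in
/-- `Jcount k σ = |𝒥(σ,k)|`, the number of internal insertion sequences of
length `k` for `σ`. -/
noncomputable def Jcount : (k : ℕ) → {n : ℕ} → Equiv.Perm (Fin n) → ℕ
  | 0, _, _ => 1
  | (k + 1), _, σ =>
      ∑ p : Fin (_ + 1) × Fin (_ + 1),
        if p ∈ internalInsertions σ then Jcount k (insertPt σ p.1 p.2) else 0


lemma succAbove_val {n : ℕ} (i : Fin (n + 1)) (a : Fin n) :
    ((i.succAbove a : Fin (n + 1)) : ℕ) = if (a : ℕ) < (i : ℕ) then (a : ℕ) else (a : ℕ) + 1 := by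
  rw [Fin.succAbove]
  split_ifs with h1 h2 h2
  · rfl
  · exact absurd h1 (by simp [Fin.lt_def] at h2 ⊢; omega)
  · exact absurd h2 (by simp [Fin.lt_def] at h1 ⊢; omega)
  · rfl

lemma succAbove_lt_self_iff {n : ℕ} (i : Fin (n + 1)) (a : Fin n) :
    i.succAbove a < i ↔ (a : ℕ) < (i : ℕ) := by
  rw [Fin.lt_def, succAbove_val]; split_ifs <;> omega

lemma self_lt_succAbove_iff {n : ℕ} (i : Fin (n + 1)) (a : Fin n) :
    i < i.succAbove a ↔ (i : ℕ) ≤ (a : ℕ) := by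
  rw [Fin.lt_def, succAbove_val]; split_ifs <;> omega

lemma le_succAbove_iff {n : ℕ} (j : Fin (n + 1)) (x : Fin n) :
    j ≤ j.succAbove x ↔ (j : ℕ) ≤ (x : ℕ) := by
  rw [Fin.le_def, succAbove_val]; split_ifs <;> omega

lemma succAbove_le_iff {n : ℕ} (j : Fin (n + 1)) (x : Fin n) :
    j.succAbove x ≤ j ↔ (x : ℕ) < (j : ℕ) := by
  rw [Fin.le_def, succAbove_val]; split_ifs <;> omega

lemma insertPt_self {n : ℕ} (σ : Perm (Fin n)) (i j : Fin (n + 1)) :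
    insertPt σ i j i = j := by
  simp [insertPt]

lemma insertPt_succAbove {n : ℕ} (σ : Perm (Fin n)) (i j : Fin (n + 1)) (a : Fin n) :
    insertPt σ i j (i.succAbove a) = j.succAbove (σ a) := by
  simp [insertPt]

/-- The four-quadrant characterization of internality. -/
def Internal {n : ℕ} (σ : Perm (Fin n)) (i j : Fin (n + 1)) : Prop :=
  (∃ a : Fin n, (a : ℕ) < (i : ℕ) ∧ (j : ℕ) ≤ (σ a : ℕ)) ∧
  (∃ a : Fin n, (a : ℕ) < (i : ℕ) ∧ (σ a : ℕ) < (j : ℕ)) ∧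
  (∃ a : Fin n, (i : ℕ) ≤ (a : ℕ) ∧ (j : ℕ) ≤ (σ a : ℕ)) ∧
  (∃ a : Fin n, (i : ℕ) ≤ (a : ℕ) ∧ (σ a : ℕ) < (j : ℕ))

lemma mem_internal_iff {n : ℕ} (σ : Perm (Fin n)) (i j : Fin (n + 1)) :
    (i, j) ∈ internalInsertions σ ↔ Internal σ i j := by
  classical
  simp only [internalInsertions, Finset.mem_filter, Finset.mem_univ, true_and]
  unfold IsRecord
  push_neg
  constructor
  · rintro ⟨⟨b1, hb1, h1⟩, ⟨b2, hb2, h2⟩, ⟨b3, hb3, h3⟩, ⟨b4, hb4, h4⟩⟩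
    refine ⟨?_, ?_, ?_, ?_⟩
    · obtain ⟨a, rfl⟩ := Fin.exists_succAbove_eq (ne_of_lt hb1)
      rw [insertPt_succAbove, insertPt_self, le_succAbove_iff] at h1
      rw [succAbove_lt_self_iff] at hb1
      exact ⟨a, hb1, h1⟩
    · obtain ⟨a, rfl⟩ := Fin.exists_succAbove_eq (ne_of_lt hb2)
      rw [insertPt_succAbove, insertPt_self, succAbove_le_iff] at h2
      rw [succAbove_lt_self_iff] at hb2
      exact ⟨a, hb2, h2⟩
    · obtain ⟨a, rfl⟩ := Fin.exists_succAbove_eq (ne_of_gt hb3)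
      rw [insertPt_succAbove, insertPt_self, le_succAbove_iff] at h3
      rw [self_lt_succAbove_iff] at hb3
      exact ⟨a, hb3, h3⟩
    · obtain ⟨a, rfl⟩ := Fin.exists_succAbove_eq (ne_of_gt hb4)
      rw [insertPt_succAbove, insertPt_self, succAbove_le_iff] at h4
      rw [self_lt_succAbove_iff] at hb4
      exact ⟨a, hb4, h4⟩
  · rintro ⟨⟨a1, ha1, h1⟩, ⟨a2, ha2, h2⟩, ⟨a3, ha3, h3⟩, ⟨a4, ha4, h4⟩⟩
    exact ⟨⟨i.succAbove a1, (succAbove_lt_self_iff i a1).2 ha1, by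
              rw [insertPt_succAbove, insertPt_self, le_succAbove_iff]; exact h1⟩,
           ⟨i.succAbove a2, (succAbove_lt_self_iff i a2).2 ha2, by
              rw [insertPt_succAbove, insertPt_self, succAbove_le_iff]; exact h2⟩,
           ⟨i.succAbove a3, (self_lt_succAbove_iff i a3).2 ha3, by
              rw [insertPt_succAbove, insertPt_self, le_succAbove_iff]; exact h3⟩,
           ⟨i.succAbove a4, (self_lt_succAbove_iff i a4).2 ha4, by
              rw [insertPt_succAbove, insertPt_self, succAbove_le_iff]; exact h4⟩⟩

/-- Lift an insertion position of `σ` to one of `insertPt σ i j`. -/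
lemma internal_lift {n : ℕ} (σ : Perm (Fin n)) (i j i' j' : Fin (n + 1))
    (h : Internal σ i' j') :
    Internal (insertPt σ i j) (i.succ.succAbove i') (j.succ.succAbove j') := by
  obtain ⟨⟨a1, ha1, h1⟩, ⟨a2, ha2, h2⟩, ⟨a3, ha3, h3⟩, ⟨a4, ha4, h4⟩⟩ := h
  refine ⟨⟨i.succAbove a1, ?_, ?_⟩, ⟨i.succAbove a2, ?_, ?_⟩,
          ⟨i.succAbove a3, ?_, ?_⟩, ⟨i.succAbove a4, ?_, ?_⟩⟩ <;>
    simp only [insertPt_succAbove, succAbove_val, Fin.val_succ] <;>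
    split_ifs <;> omega

/-- Collapse map deleting the inserted coordinate. -/
def dmap {n : ℕ} (i : Fin (n + 1)) (c : Fin (n + 2)) : Fin (n + 1) :=
  ⟨if (c : ℕ) ≤ (i : ℕ) then (c : ℕ) else (c : ℕ) - 1, by
    have h1 := c.is_lt; have h2 := i.is_lt; split_ifs <;> omega⟩

lemma dmap_val {n : ℕ} (i : Fin (n + 1)) (c : Fin (n + 2)) :
    ((dmap i c : Fin (n + 1)) : ℕ) = if (c : ℕ) ≤ (i : ℕ) then (c : ℕ) else (c : ℕ) - 1 := rfl

/-- If the inserted point is internal, collapsing maps internal insertions of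
`insertPt σ i j` to internal insertions of `σ`. -/
lemma internal_delete {n : ℕ} (σ : Perm (Fin n)) (i j : Fin (n + 1))
    (hp : Internal σ i j) {c d : Fin (n + 2)}
    (hq : Internal (insertPt σ i j) c d) :
    Internal σ (dmap i c) (dmap j d) := by
  obtain ⟨⟨p1, hp1, g1⟩, ⟨p2, hp2, g2⟩, ⟨p3, hp3, g3⟩, ⟨p4, hp4, g4⟩⟩ := hp
  obtain ⟨⟨b1, hb1, h1⟩, ⟨b2, hb2, h2⟩, ⟨b3, hb3, h3⟩, ⟨b4, hb4, h4⟩⟩ := hq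
  refine ⟨?_, ?_, ?_, ?_⟩
  · by_cases hb : b1 = i
    · rw [hb] at hb1; rw [hb, insertPt_self] at h1
      exact ⟨p1, by simp only [dmap_val]; split_ifs <;> omega⟩
    · obtain ⟨a, rfl⟩ := Fin.exists_succAbove_eq hb
      rw [insertPt_succAbove] at h1
      simp only [succAbove_val] at h1 hb1
      exact ⟨a, by simp only [dmap_val]; split_ifs at h1 hb1 ⊢ <;> omega⟩
  · by_cases hb : b2 = i
    · rw [hb] at hb2; rw [hb, insertPt_self] at h2
      exact ⟨p2, by simp only [dmap_val]; split_ifs <;> omega⟩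
    · obtain ⟨a, rfl⟩ := Fin.exists_succAbove_eq hb
      rw [insertPt_succAbove] at h2
      simp only [succAbove_val] at h2 hb2
      exact ⟨a, by simp only [dmap_val]; split_ifs at h2 hb2 ⊢ <;> omega⟩
  · by_cases hb : b3 = i
    · rw [hb] at hb3; rw [hb, insertPt_self] at h3
      exact ⟨p3, by simp only [dmap_val]; split_ifs <;> omega⟩
    · obtain ⟨a, rfl⟩ := Fin.exists_succAbove_eq hb
      rw [insertPt_succAbove] at h3
      simp only [succAbove_val] at h3 hb3
      exact ⟨a, by simp only [dmap_val]; split_ifs at h3 hb3 ⊢ <;> omega⟩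
  · by_cases hb : b4 = i
    · rw [hb] at hb4; rw [hb, insertPt_self] at h4
      exact ⟨p4, by simp only [dmap_val]; split_ifs <;> omega⟩
    · obtain ⟨a, rfl⟩ := Fin.exists_succAbove_eq hb
      rw [insertPt_succAbove] at h4
      simp only [succAbove_val] at h4 hb4
      exact ⟨a, by simp only [dmap_val]; split_ifs at h4 hb4 ⊢ <;> omega⟩

lemma card_mono {n : ℕ} (σ : Perm (Fin n)) (i j : Fin (n + 1)) :
    (internalInsertions σ).card ≤ (internalInsertions (insertPt σ i j)).card := by
  classical
  apply Finset.card_le_card_of_injOn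
    (fun q => (i.succ.succAbove q.1, j.succ.succAbove q.2))
  · intro q hq
    rw [show q = (q.1, q.2) from rfl, Finset.mem_coe, mem_internal_iff] at hq
    rw [Finset.mem_coe, mem_internal_iff]
    exact internal_lift σ i j q.1 q.2 hq
  · intro q1 _ q2 _ h
    simp only [Prod.mk.injEq] at h
    exact Prod.ext (Fin.succAbove_right_injective h.1) (Fin.succAbove_right_injective h.2)

lemma dmap_inj {n : ℕ} (i : Fin (n + 1)) {c1 c2 : Fin (n + 2)}
    (h1 : c1 ≠ i.succ) (h2 : c2 ≠ i.succ) (h : dmap i c1 = dmap i c2) : c1 = c2 := by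
  have e1 : (c1 : ℕ) ≠ (i : ℕ) + 1 := fun he => h1 (Fin.ext (by rw [Fin.val_succ]; exact he))
  have e2 : (c2 : ℕ) ≠ (i : ℕ) + 1 := fun he => h2 (Fin.ext (by rw [Fin.val_succ]; exact he))
  have := congrArg Fin.val h
  simp only [dmap_val] at this
  exact Fin.ext (by split_ifs at this <;> omega)

lemma card_insert_le {n : ℕ} (σ : Perm (Fin n)) (i j : Fin (n + 1))
    (hp : (i, j) ∈ internalInsertions σ) :
    (internalInsertions (insertPt σ i j)).card ≤ (internalInsertions σ).card + (2 * n + 3) := by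
  classical
  rw [mem_internal_iff] at hp
  set S := internalInsertions (insertPt σ i j) with hS
  have hsplit := Finset.card_filter_add_card_filter_not
    (s := S) (p := fun q => q.1 = i.succ ∨ q.2 = j.succ)
  set T := S.filter (fun q => q.1 = i.succ ∨ q.2 = j.succ) with hT
  set U := S.filter (fun q => ¬(q.1 = i.succ ∨ q.2 = j.succ)) with hU
  have hTcard : T.card ≤ 2 * n + 3 := by
    have hsub : T ⊆ (({i.succ} : Finset (Fin (n + 2))) ×ˢ Finset.univ) ∪
        (Finset.univ ×ˢ ({j.succ} : Finset (Fin (n + 2)))) := by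
      intro q hq
      rw [hT, Finset.mem_filter] at hq
      rcases hq.2 with h | h
      · exact Finset.mem_union_left _ (Finset.mem_product.2 ⟨by simp [h], Finset.mem_univ _⟩)
      · exact Finset.mem_union_right _ (Finset.mem_product.2 ⟨Finset.mem_univ _, by simp [h]⟩)
    refine (Finset.card_le_card hsub).trans ?_
    have hu := Finset.card_union_add_card_inter
      (({i.succ} : Finset (Fin (n + 2))) ×ˢ (Finset.univ : Finset (Fin (n + 2))))
      ((Finset.univ : Finset (Fin (n + 2))) ×ˢ ({j.succ} : Finset (Fin (n + 2))))
    rw [Finset.product_inter_product] at hu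
    simp only [Finset.singleton_inter_of_mem (Finset.mem_univ _),
      Finset.univ_inter, Finset.inter_univ] at hu
    rw [Finset.card_product, Finset.card_product, Finset.card_product] at hu
    simp only [Finset.card_singleton, Finset.card_univ, Fintype.card_fin] at hu
    omega
  have hUcard : U.card ≤ (internalInsertions σ).card := by
    apply Finset.card_le_card_of_injOn (fun q => (dmap i q.1, dmap j q.2))
    · intro q hq
      rw [Finset.mem_coe, hU, Finset.mem_filter] at hq
      have := hq.1
      rw [hS, show q = (q.1, q.2) from rfl, mem_internal_iff] at this
      rw [Finset.mem_coe, mem_internal_iff]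
      exact internal_delete σ i j hp this
    · intro q1 hq1 q2 hq2 h
      simp only [hU, Finset.coe_filter, Set.mem_setOf_eq, not_or] at hq1 hq2
      simp only [Prod.mk.injEq] at h
      exact Prod.ext (dmap_inj i hq1.2.1 hq2.2.1 h.1) (dmap_inj j hq1.2.2 hq2.2.2 h.2)
  omega

lemma jcount_succ {n : ℕ} (σ : Perm (Fin n)) (k : ℕ) :
    Jcount (k + 1) σ = ∑ p ∈ internalInsertions σ, Jcount k (insertPt σ p.1 p.2) := by
  classical
  rw [Jcount]
  rw [Finset.sum_ite_mem, Finset.univ_inter]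

lemma jcount_lower (k : ℕ) : ∀ {n : ℕ} (σ : Perm (Fin n)),
    (internalInsertions σ).card ^ k ≤ Jcount k σ := by
  induction k with
  | zero => intro n σ; rw [Jcount]; simp
  | succ k ih =>
    intro n σ
    rw [jcount_succ, pow_succ']
    calc (internalInsertions σ).card * (internalInsertions σ).card ^ k
        = (internalInsertions σ).card • (internalInsertions σ).card ^ k := by
          rw [smul_eq_mul]
      _ ≤ ∑ p ∈ internalInsertions σ, Jcount k (insertPt σ p.1 p.2) := by
          apply Finset.card_nsmul_le_sum
          intro p _
          exact le_trans (Nat.pow_le_pow_left (card_mono σ p.1 p.2) k) (ih _)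

lemma jcount_upper (k : ℕ) : ∀ {n : ℕ} (σ : Perm (Fin n)),
    Jcount k σ ≤ ((internalInsertions σ).card + (k - 1) * (2 * n + k + 1)) ^ k := by
  induction k with
  | zero => intro n σ; rw [Jcount]; simp
  | succ k ih =>
    intro n σ
    rw [jcount_succ]
    have key : ∀ p ∈ internalInsertions σ,
        Jcount k (insertPt σ p.1 p.2) ≤
          ((internalInsertions σ).card + k * (2 * n + k + 2)) ^ k := by
      intro p hp
      rcases Nat.eq_zero_or_pos k with rfl | hk
      · rw [Jcount]; simp
      · obtain ⟨t, rfl⟩ : ∃ t, k = t + 1 := ⟨k - 1, by omega⟩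
        refine (ih (insertPt σ p.1 p.2)).trans (Nat.pow_le_pow_left ?_ _)
        have hc := card_insert_le σ p.1 p.2 (by rwa [show p = (p.1, p.2) from rfl] at hp)
        simp only [Nat.add_sub_cancel]
        have harith : (t + 1) * (2 * n + (t + 1) + 2)
            = 2 * n + 3 + t * (2 * (n + 1) + (t + 1) + 1) := by ring
        rw [harith]
        exact le_trans (Nat.add_le_add_right hc _) (le_of_eq (Nat.add_assoc _ _ _))
    calc ∑ p ∈ internalInsertions σ, Jcount k (insertPt σ p.1 p.2)
        ≤ (internalInsertions σ).card •
            ((internalInsertions σ).card + k * (2 * n + k + 2)) ^ k :=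
          Finset.sum_le_card_nsmul _ _ _ key
      _ ≤ ((internalInsertions σ).card + (k + 1 - 1) * (2 * n + (k + 1) + 1)) ^ (k + 1) := by
          simp only [Nat.add_sub_cancel, smul_eq_mul]
          have : 2 * n + (k + 1) + 1 = 2 * n + k + 2 := by ring
          rw [this, pow_succ']
          exact Nat.mul_le_mul_right _ (Nat.le_add_right _ _)


/-- for a permutation `σ` of size `n` and `k > 0`,
`|I(σ)|^k ≤ |𝒥(σ,k)| ≤ (|I(σ)| + 2nk + k²)^k`. -/
theorem insertion_sequences_bounds {n : ℕ} (σ : Equiv.Perm (Fin n)) (k : ℕ)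
    (hk : 0 < k) :
    (internalInsertions σ).card ^ k ≤ Jcount k σ ∧
    Jcount k σ ≤ ((internalInsertions σ).card + 2 * n * k + k ^ 2) ^ k := by
  refine ⟨jcount_lower k σ, (jcount_upper k σ).trans (Nat.pow_le_pow_left ?_ k)⟩
  obtain ⟨t, rfl⟩ : ∃ t, k = t + 1 := ⟨k - 1, by omega⟩
  simp only [Nat.add_sub_cancel]
  have hb : t * (2 * n + (t + 1) + 1) ≤ 2 * n * (t + 1) + (t + 1) ^ 2 :=
    Nat.le.intro (k := 2 * n + 1) (by ring)
  calc (internalInsertions σ).card + t * (2 * n + (t + 1) + 1)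
      ≤ (internalInsertions σ).card + (2 * n * (t + 1) + (t + 1) ^ 2) :=
        Nat.add_le_add_left hb _
    _ = (internalInsertions σ).card + 2 * n * (t + 1) + (t + 1) ^ 2 :=
        (Nat.add_assoc _ _ _).symm
end

section
/- Let σ be a permutation of size n and let σ' be a permutation of size n+1 obtained from σ by inserting one point (not necessarily internal). Then the rectangular distance between the associated permutons satisfies d_□(μ_σ, μ_{σ'}) ≤ 6/n. -/
open Equiv MeasureTheory

/-- The permuton `μ_σ` associated with a permutation `σ` of size `n`:
`μ_σ = n · Σ_{i=1}^n Leb([(i−1)/n, i/n] × [(σ(i)−1)/n, σ(i)/n])`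
(here positions and values are 0-based). -/
noncomputable def permuton {n : ℕ} (σ : Equiv.Perm (Fin n)) :
    Measure (ℝ × ℝ) :=
  (n : ENNReal) • ∑ i : Fin n,
    (volume.restrict
      (Set.Icc ((i : ℝ) / n) (((i : ℝ) + 1) / n) ×ˢ
       Set.Icc (((σ i : ℕ) : ℝ) / n) ((((σ i : ℕ) : ℝ) + 1) / n)))

/-! ### Auxiliary development -/

/-- Length of the intersection `[s,t] ∩ [u,v]`. -/
noncomputable def ll (s t u v : ℝ) : ℝ := max (min t v - max s u) 0

lemma ll_nonneg (s t u v : ℝ) : 0 ≤ ll s t u v := le_max_right _ _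

lemma ll_le {u v : ℝ} (s t : ℝ) (h : u ≤ v) : ll s t u v ≤ v - u := by
  unfold ll
  have h1 : min t v ≤ v := min_le_right _ _
  have h2 : u ≤ max s u := le_max_right _ _
  apply max_le <;> linarith

lemma ll_le' {s t : ℝ} (u v : ℝ) (h : s ≤ t) : ll s t u v ≤ t - s := by
  unfold ll
  have h1 : min t v ≤ t := min_le_left _ _
  have h2 : s ≤ max s u := le_max_left _ _
  apply max_le <;> linarith

lemma ll_mono {s s' t t' : ℝ} (u v : ℝ) (hs : s' ≤ s) (ht : t ≤ t') :
    ll s t u v ≤ ll s' t' u v := by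
  unfold ll
  apply max_le_max _ le_rfl
  have h1 : min t v ≤ min t' v := min_le_min ht le_rfl
  have h2 : max s' u ≤ max s u := max_le_max hs le_rfl
  linarith

lemma ll_self (s t u : ℝ) : ll s t u u = 0 := by
  unfold ll
  apply max_eq_right
  have h1 : min t u ≤ u := min_le_right _ _
  have h2 : u ≤ max s u := le_max_right _ _
  linarith

lemma ll_zero {s t : ℝ} (u v : ℝ) (h : t < s) : ll s t u v = 0 := by
  unfold ll
  apply max_eq_right
  have h1 : min t v ≤ t := min_le_left _ _
  have h2 : s ≤ max s u := le_max_left _ _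
  linarith

lemma ll_add {u v w : ℝ} (s t : ℝ) (h1 : u ≤ v) (h2 : v ≤ w) :
    ll s t u v + ll s t v w = ll s t u w := by
  simp only [ll, _root_.max_def, _root_.min_def]
  split_ifs <;> linarith

lemma ll_translate (s t u v c : ℝ) : ll (s + c) (t + c) (u + c) (v + c) = ll s t u v := by
  unfold ll
  rw [min_add_add_right, max_add_add_right]
  ring_nf

lemma ll_scale {r : ℝ} (hr : 0 ≤ r) (s t u v : ℝ) :
    ll (r * s) (r * t) (r * u) (r * v) = r * ll s t u v := by
  simp only [ll, mul_max_of_nonneg _ _ hr, mul_min_of_nonneg _ _ hr, mul_sub, mul_zero]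

/-- `Fg s t N k` is the length of `[s,t] ∩ [k/N, (k+1)/N]`. -/
noncomputable def Fg (s t : ℝ) (N : ℕ) (k : ℕ) : ℝ :=
  ll s t ((k : ℝ) / N) (((k : ℝ) + 1) / N)

lemma Fg_nonneg (s t : ℝ) (N k : ℕ) : 0 ≤ Fg s t N k := ll_nonneg _ _ _ _

lemma Fg_le {N : ℕ} (hN : 0 < N) (s t : ℝ) (k : ℕ) : Fg s t N k ≤ 1 / N := by
  have hNR : (0:ℝ) < N := by exact_mod_cast hN
  have h : (k : ℝ) / N ≤ ((k : ℝ) + 1) / N := by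
    rw [div_le_div_iff_of_pos_right hNR]
    linarith
  calc Fg s t N k ≤ ((k : ℝ) + 1) / N - (k : ℝ) / N := ll_le s t h
    _ = 1 / N := by field_simp; ring

lemma Fg_mono {s s' t t' : ℝ} (hs : s' ≤ s) (ht : t ≤ t') (N k : ℕ) :
    Fg s t N k ≤ Fg s' t' N k := ll_mono _ _ hs ht

lemma sum_ll_tele (s t : ℝ) (N : ℕ) (c : ℕ → ℝ) (hc : ∀ k, c k ≤ c (k + 1)) :
    ∑ m ∈ Finset.range N, ll s t (c m) (c (m + 1)) = ll s t (c 0) (c N) := by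
  induction N with
  | zero => simp [ll_self]
  | succ N ih =>
    rw [Finset.sum_range_succ, ih]
    exact ll_add s t (monotone_nat_of_le_succ hc (Nat.zero_le N)) (hc N)

lemma Fg_sum_tele {N : ℕ} (hN : 0 < N) (s t : ℝ) :
    ∑ m : Fin N, Fg s t N (m : ℕ) = ll s t 0 1 := by
  have hNR : (0:ℝ) < N := by exact_mod_cast hN
  unfold Fg
  rw [Fin.sum_univ_eq_sum_range (fun m : ℕ => ll s t ((m : ℝ) / N) (((m : ℝ) + 1) / N))]
  rw [show (fun m : ℕ => ll s t ((m : ℝ) / N) (((m : ℝ) + 1) / N))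
      = fun m : ℕ => ll s t ((m : ℝ) / N) (((m + 1 : ℕ) : ℝ) / N) by
    funext m; push_cast; ring_nf]
  rw [sum_ll_tele s t N (fun m : ℕ => (m : ℝ) / N)
    (fun k => by rw [div_le_div_iff_of_pos_right hNR]; push_cast; linarith)]
  simp only [Nat.cast_zero, zero_div, div_self hNR.ne']

lemma Fg_sum_eq {N : ℕ} (hN : 0 < N) {s t : ℝ} (h0 : 0 ≤ s) (hst : s ≤ t) (h1 : t ≤ 1) :
    ∑ m : Fin N, Fg s t N (m : ℕ) = t - s := by
  rw [Fg_sum_tele hN]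
  unfold ll
  rw [min_eq_left h1, max_eq_left h0, max_eq_left (by linarith)]

lemma Fg_sum_le {N : ℕ} (hN : 0 < N) {s t : ℝ} (hst : s ≤ t) :
    ∑ m : Fin N, Fg s t N (m : ℕ) ≤ t - s := by
  rw [Fg_sum_tele hN]
  exact ll_le' 0 1 hst

lemma Fg_zero {s t : ℝ} (h : t < s) (N k : ℕ) : Fg s t N k = 0 := ll_zero _ _ h

/-- The key comparison inequality: a cell of the fine grid (`N = n+1`) is controlled
by the corresponding slightly enlarged cell of the coarse grid (`N = n`). -/
lemma K2 {n : ℕ} (hn : 0 < n) {a b : ℝ} (ha : 0 ≤ a) (ha1 : a ≤ 1) (hb : 0 ≤ b) (hb1 : b ≤ 1)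
    {k m : ℕ} (hk : k = m ∨ k = m + 1) :
    ((n:ℝ) + 1) * Fg a b (n + 1) k ≤ (n:ℝ) * Fg (a - 1/n) (b + 1/n) n m := by
  have hnR : (0:ℝ) < n := by exact_mod_cast hn
  have hn1 : (0:ℝ) < (n:ℝ) + 1 := by linarith
  unfold Fg
  push_cast
  have L : ((n:ℝ)+1) * ll a b ((k:ℝ)/((n:ℝ)+1)) (((k:ℝ)+1)/((n:ℝ)+1))
      = ll (((n:ℝ)+1)*a) (((n:ℝ)+1)*b) (k:ℝ) ((k:ℝ)+1) := by
    rw [← ll_scale hn1.le a b (((k:ℝ))/((n:ℝ)+1)) (((k:ℝ)+1)/((n:ℝ)+1))]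
    congr 1 <;> field_simp
  have R : (n:ℝ) * ll (a - 1/n) (b + 1/n) ((m:ℝ)/n) (((m:ℝ)+1)/n)
      = ll ((n:ℝ)*a - 1) ((n:ℝ)*b + 1) (m:ℝ) ((m:ℝ)+1) := by
    rw [← ll_scale hnR.le (a - 1/n) (b + 1/n) ((m:ℝ)/n) (((m:ℝ)+1)/n)]
    congr 1 <;> field_simp <;> ring
  rw [L, R]
  rcases hk with rfl | rfl
  · exact ll_mono _ _ (by nlinarith) (by nlinarith)
  · push_cast
    have htr : ll (((n:ℝ)+1)*a) (((n:ℝ)+1)*b) ((m:ℝ)+1) ((m:ℝ)+1+1)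
        = ll (((n:ℝ)+1)*a - 1) (((n:ℝ)+1)*b - 1) (m:ℝ) ((m:ℝ)+1) := by
      rw [← ll_translate (((n:ℝ)+1)*a - 1) (((n:ℝ)+1)*b - 1) (m:ℝ) ((m:ℝ)+1) 1]
      ring_nf
    rw [htr]
    exact ll_mono _ _ (by nlinarith) (by nlinarith)

/-- The reverse comparison inequality. -/
lemma K2' {n : ℕ} (hn : 0 < n) {a b : ℝ} (ha : 0 ≤ a) (ha1 : a ≤ 1) (hb : 0 ≤ b) (hb1 : b ≤ 1)
    {k m : ℕ} (hk : k = m ∨ k = m + 1) :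
    (n:ℝ) * Fg a b n m ≤ ((n:ℝ) + 1) * Fg (a - 1/n) (b + 1/n) (n + 1) k := by
  have hnR : (0:ℝ) < n := by exact_mod_cast hn
  have hn1 : (0:ℝ) < (n:ℝ) + 1 := by linarith
  have hd : (1:ℝ) ≤ ((n:ℝ)+1)/n := by rw [le_div_iff₀ hnR]; linarith
  unfold Fg
  push_cast
  have L : (n:ℝ) * ll a b ((m:ℝ)/n) (((m:ℝ)+1)/n)
      = ll ((n:ℝ)*a) ((n:ℝ)*b) (m:ℝ) ((m:ℝ)+1) := by
    rw [← ll_scale hnR.le a b ((m:ℝ)/n) (((m:ℝ)+1)/n)]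
    congr 1 <;> field_simp
  have R : ((n:ℝ)+1) * ll (a - 1/n) (b + 1/n) ((k:ℝ)/((n:ℝ)+1)) (((k:ℝ)+1)/((n:ℝ)+1))
      = ll (((n:ℝ)+1)*a - ((n:ℝ)+1)/n) (((n:ℝ)+1)*b + ((n:ℝ)+1)/n) (k:ℝ) ((k:ℝ)+1) := by
    rw [← ll_scale hn1.le (a - 1/n) (b + 1/n) ((k:ℝ)/((n:ℝ)+1)) (((k:ℝ)+1)/((n:ℝ)+1))]
    congr 1 <;> field_simp <;> ring
  rw [L, R]
  rcases hk with rfl | rfl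
  · exact ll_mono _ _ (by nlinarith) (by nlinarith)
  · push_cast
    have htr : ll (((n:ℝ)+1)*a - ((n:ℝ)+1)/n) (((n:ℝ)+1)*b + ((n:ℝ)+1)/n) ((m:ℝ)+1) ((m:ℝ)+1+1)
        = ll (((n:ℝ)+1)*a - ((n:ℝ)+1)/n - 1) (((n:ℝ)+1)*b + ((n:ℝ)+1)/n - 1) (m:ℝ) ((m:ℝ)+1) := by
      rw [← ll_translate (((n:ℝ)+1)*a - ((n:ℝ)+1)/n - 1)
        (((n:ℝ)+1)*b + ((n:ℝ)+1)/n - 1) (m:ℝ) ((m:ℝ)+1) 1]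
      ring_nf
    rw [htr]
    exact ll_mono _ _ (by nlinarith) (by nlinarith)

lemma permuton_apply {n : ℕ} (σ : Equiv.Perm (Fin n)) (a b c d : ℝ) :
    (permuton σ (Set.Icc a b ×ˢ Set.Icc c d)).toReal =
      n * ∑ m : Fin n, Fg a b n (m : ℕ) * Fg c d n ((σ m : ℕ)) := by
  have hmeas : MeasurableSet (Set.Icc a b ×ˢ Set.Icc c d) :=
    measurableSet_Icc.prod measurableSet_Icc
  unfold permuton
  rw [Measure.smul_apply, smul_eq_mul, Measure.finset_sum_apply]
  rw [ENNReal.toReal_mul, ENNReal.toReal_natCast]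
  congr 1
  rw [ENNReal.toReal_sum]
  · apply Finset.sum_congr rfl
    intro m _
    rw [Measure.restrict_apply hmeas, Set.prod_inter_prod, Measure.volume_eq_prod,
      Measure.prod_prod, Set.Icc_inter_Icc, Set.Icc_inter_Icc, Real.volume_Icc,
      Real.volume_Icc, ENNReal.toReal_mul, ENNReal.toReal_ofReal', ENNReal.toReal_ofReal']
    unfold Fg ll
    rw [min_comm b _, max_comm a _, min_comm d _, max_comm c _]
  · intro m _
    rw [Measure.restrict_apply hmeas]
    refine (lt_of_le_of_lt (measure_mono Set.inter_subset_right) ?_).ne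
    rw [Measure.volume_eq_prod, Measure.prod_prod, Real.volume_Icc, Real.volume_Icc]
    exact ENNReal.mul_lt_top ENNReal.ofReal_lt_top ENNReal.ofReal_lt_top

lemma insertPt_apply_self {n : ℕ} (σ : Equiv.Perm (Fin n)) (i j : Fin (n + 1)) :
    insertPt σ i j i = j := by
  simp [insertPt]

lemma insertPt_apply_succAbove {n : ℕ} (σ : Equiv.Perm (Fin n)) (i j : Fin (n + 1))
    (m : Fin n) : insertPt σ i j (i.succAbove m) = j.succAbove (σ m) := by
  simp [insertPt, finSuccEquiv'_succAbove]

lemma succAbove_coe {n : ℕ} (i : Fin (n + 1)) (m : Fin n) :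
    ((i.succAbove m : Fin (n + 1)) : ℕ) = (m : ℕ) ∨
      ((i.succAbove m : Fin (n + 1)) : ℕ) = (m : ℕ) + 1 := by
  rcases lt_or_ge m.castSucc i with h | h
  · left; rw [Fin.succAbove_of_castSucc_lt _ _ h]; rfl
  · right; rw [Fin.succAbove_of_le_castSucc _ _ h]; rfl

/-- The "strip" bound: replacing each factor by its slightly enlarged version costs
at most `e * SF + e * SG`. -/
lemma dir_aux {N : ℕ} (τ : Equiv.Perm (Fin N)) (F G Fb Gb : Fin N → ℝ) {e SF SG : ℝ}
    (he : 0 ≤ e)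
    (hFb : ∀ m, F m ≤ Fb m) (hGb : ∀ m, G m ≤ Gb m)
    (hF1 : ∀ m, F m ≤ e) (hGb1 : ∀ m, Gb m ≤ e)
    (hSF : ∑ m, (Fb m - F m) ≤ SF) (hSG : ∑ m, (Gb m - G m) ≤ SG) :
    ∑ m, Fb m * Gb (τ m) ≤ (∑ m, F m * G (τ m)) + e * SF + e * SG := by
  have key : ∀ m, Fb m * Gb (τ m) ≤
      F m * G (τ m) + e * (Fb m - F m) + e * (Gb (τ m) - G (τ m)) := by
    intro m
    nlinarith [mul_le_mul_of_nonneg_left (hGb1 (τ m)) (sub_nonneg.2 (hFb m)),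
      mul_le_mul_of_nonneg_right (hF1 m) (sub_nonneg.2 (hGb (τ m)))]
  calc ∑ m, Fb m * Gb (τ m)
      ≤ ∑ m, (F m * G (τ m) + e * (Fb m - F m) + e * (Gb (τ m) - G (τ m))) :=
        Finset.sum_le_sum (fun m _ => key m)
    _ = (∑ m, F m * G (τ m)) + e * (∑ m, (Fb m - F m))
          + e * (∑ m, (Gb (τ m) - G (τ m))) := by
        rw [Finset.sum_add_distrib, Finset.sum_add_distrib, Finset.mul_sum, Finset.mul_sum]
    _ = (∑ m, F m * G (τ m)) + e * (∑ m, (Fb m - F m))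
          + e * (∑ m, (Gb m - G m)) := by
        rw [Equiv.sum_comp τ (fun p => Gb p - G p)]
    _ ≤ (∑ m, F m * G (τ m)) + e * SF + e * SG := by
        have h1 := mul_le_mul_of_nonneg_left hSF he
        have h2 := mul_le_mul_of_nonneg_left hSG he
        linarith

/-- Any permuton value of a rectangle is at most `1`. -/
lemma trivial_bound {N : ℕ} (hN : 0 < N) (τ : Equiv.Perm (Fin N)) (F G : Fin N → ℝ)
    (hF0 : ∀ m, 0 ≤ F m) (hG0 : ∀ m, 0 ≤ G m)
    (hF1 : ∀ m, F m ≤ 1 / N) (hG1 : ∀ m, G m ≤ 1 / N) :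
    (N : ℝ) * ∑ m, F m * G (τ m) ≤ 1 := by
  have hNR : (0:ℝ) < N := by exact_mod_cast hN
  have h : ∑ m, F m * G (τ m) ≤ ∑ _m : Fin N, (1/(N:ℝ)) * (1/(N:ℝ)) :=
    Finset.sum_le_sum (fun m _ => mul_le_mul (hF1 m) (hG1 (τ m)) (hG0 (τ m)) (by positivity))
  have h2 : ∑ _m : Fin N, (1/(N:ℝ)) * (1/(N:ℝ)) = N * (1/(N:ℝ) * (1/(N:ℝ))) := by
    rw [Finset.sum_const, Finset.card_univ, Fintype.card_fin, nsmul_eq_mul]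
  calc (N : ℝ) * ∑ m, F m * G (τ m) ≤ (N:ℝ) * ((N:ℝ) * (1/(N:ℝ) * (1/(N:ℝ)))) := by
        apply mul_le_mul_of_nonneg_left _ hNR.le
        rw [← h2]; exact h
    _ = 1 := by field_simp

lemma prod_step {nr P Q U V : ℝ} (hnr : 0 < nr) (hU : 0 ≤ U) (hV : 0 ≤ V)
    (hP : 0 ≤ P) (hQ : 0 ≤ Q)
    (k1 : (nr + 1) * P ≤ nr * U) (k2 : (nr + 1) * Q ≤ nr * V) :
    (nr + 1) * (P * Q) ≤ nr * (U * V) := by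
  have h : ((nr+1)*P) * ((nr+1)*Q) ≤ (nr*U)*(nr*V) :=
    mul_le_mul k1 k2 (by positivity) (by positivity)
  have huv : 0 ≤ U * V := mul_nonneg hU hV
  have key : (nr+1)*((nr+1)*(P*Q)) ≤ (nr+1)*(nr*(U*V)) := by
    nlinarith [h, mul_nonneg hnr.le huv]
  exact le_of_mul_le_mul_left key (by linarith)

lemma prod_step' {nr P Q U V : ℝ} (hnr : 0 < nr) (hU : 0 ≤ U) (hV : 0 ≤ V)
    (hP : 0 ≤ P) (hQ : 0 ≤ Q)
    (k1 : nr * P ≤ (nr + 1) * U) (k2 : nr * Q ≤ (nr + 1) * V) :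
    nr * (P * Q) ≤ (nr + 1) * (nr + 1) / nr * (U * V) := by
  have h : (nr*P)*(nr*Q) ≤ ((nr+1)*U)*((nr+1)*V) :=
    mul_le_mul k1 k2 (by positivity) (by positivity)
  rw [div_mul_eq_mul_div, le_div_iff₀ hnr]
  nlinarith [h]


set_option maxHeartbeats 2000000 in
/-- if `σ'` is obtained from a permutation `σ` of size `n ≥ 1` by
inserting one point (not necessarily internal), then for every axis-parallel
rectangle `R ⊆ [0,1]²` one has `|μ_σ(R) − μ_{σ'}(R)| ≤ 6/n`; that is,
`d_□(μ_σ, μ_{σ'}) ≤ 6/n`. -/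
theorem permuton_insertion_distance {n : ℕ} (hn : 0 < n)
    (σ : Equiv.Perm (Fin n)) (i j : Fin (n + 1)) :
    ∀ a b c d : ℝ, a ∈ Set.Icc (0:ℝ) 1 → b ∈ Set.Icc (0:ℝ) 1 →
      c ∈ Set.Icc (0:ℝ) 1 → d ∈ Set.Icc (0:ℝ) 1 →
      |(permuton σ (Set.Icc a b ×ˢ Set.Icc c d)).toReal -
        (permuton (insertPt σ i j) (Set.Icc a b ×ˢ Set.Icc c d)).toReal| ≤ 6 / n := by
  intro a b c d ha hb hc hd
  obtain ⟨ha0, ha1⟩ := ha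
  obtain ⟨hb0, hb1⟩ := hb
  obtain ⟨hc0, hc1⟩ := hc
  obtain ⟨hd0, hd1⟩ := hd
  have hnR : (0:ℝ) < n := by exact_mod_cast hn
  have hn1 : (0:ℝ) < (n:ℝ) + 1 := by linarith
  set σ' : Equiv.Perm (Fin (n+1)) := insertPt σ i j with hσ'
  rw [permuton_apply σ a b c d, permuton_apply σ' a b c d]
  -- degenerate cases
  by_cases hab : a ≤ b
  case neg =>
    have h1 : ∀ N k, Fg a b N k = 0 := fun N k => Fg_zero (by linarith) N k
    simp only [h1, zero_mul, Finset.sum_const_zero, mul_zero, sub_zero, abs_zero]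
    positivity
  by_cases hcd : c ≤ d
  case neg =>
    have h1 : ∀ N k, Fg c d N k = 0 := fun N k => Fg_zero (by linarith) N k
    simp only [h1, mul_zero, Finset.sum_const_zero, sub_zero, abs_zero]
    positivity
  push_cast
  have hinv : (0:ℝ) < 1/n := by positivity
  have h2n : (2:ℝ)/n = 1/n + 1/n := by ring
  have h4n : (4:ℝ)/n = 2/n + 2/n := by ring
  have h6n : (6:ℝ)/n = 1/n + 1/n + 4/n := by ring
  have hab' : a - 1/n ≤ b + 1/n := by linarith
  have hcd' : c - 1/n ≤ d + 1/n := by linarith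
  have e1 : σ' i = j := insertPt_apply_self σ i j
  have e2 : ∀ m : Fin n, σ' (i.succAbove m) = j.succAbove (σ m) :=
    insertPt_apply_succAbove σ i j
  have hN1 : 0 < n + 1 := Nat.succ_pos n
  -- marginal sums
  have hFsum : ∑ m : Fin n, Fg a b n (m : ℕ) = b - a := Fg_sum_eq hn ha0 hab hb1
  have hGsum : ∑ m : Fin n, Fg c d n (m : ℕ) = d - c := Fg_sum_eq hn hc0 hcd hd1
  have hF'sum : ∑ k : Fin (n+1), Fg a b (n+1) (k : ℕ) = b - a :=
    Fg_sum_eq hN1 ha0 hab hb1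
  have hG'sum : ∑ k : Fin (n+1), Fg c d (n+1) (k : ℕ) = d - c :=
    Fg_sum_eq hN1 hc0 hcd hd1
  have hFbsum : ∑ m : Fin n, Fg (a - 1/n) (b + 1/n) n (m : ℕ) ≤ (b + 1/n) - (a - 1/n) :=
    Fg_sum_le hn hab'
  have hGbsum : ∑ m : Fin n, Fg (c - 1/n) (d + 1/n) n (m : ℕ) ≤ (d + 1/n) - (c - 1/n) :=
    Fg_sum_le hn hcd'
  have hF'bsum : ∑ k : Fin (n+1), Fg (a - 1/n) (b + 1/n) (n+1) (k : ℕ)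
      ≤ (b + 1/n) - (a - 1/n) := Fg_sum_le hN1 hab'
  have hG'bsum : ∑ k : Fin (n+1), Fg (c - 1/n) (d + 1/n) (n+1) (k : ℕ)
      ≤ (d + 1/n) - (c - 1/n) := Fg_sum_le hN1 hcd'
  -- strip sums
  have hSF : ∑ m : Fin n, (Fg (a - 1/n) (b + 1/n) n (m : ℕ) - Fg a b n (m : ℕ)) ≤ 2/n := by
    rw [Finset.sum_sub_distrib, hFsum]; linarith
  have hSG : ∑ m : Fin n, (Fg (c - 1/n) (d + 1/n) n (m : ℕ) - Fg c d n (m : ℕ)) ≤ 2/n := by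
    rw [Finset.sum_sub_distrib, hGsum]; linarith
  have hSF' : ∑ k : Fin (n+1), (Fg (a - 1/n) (b + 1/n) (n+1) (k : ℕ)
      - Fg a b (n+1) (k : ℕ)) ≤ 2/n := by
    rw [Finset.sum_sub_distrib, hF'sum]; linarith
  have hSG' : ∑ k : Fin (n+1), (Fg (c - 1/n) (d + 1/n) (n+1) (k : ℕ)
      - Fg c d (n+1) (k : ℕ)) ≤ 2/n := by
    rw [Finset.sum_sub_distrib, hG'sum]; linarith
  -- cast helper
  have hcast : (1:ℝ)/((n:ℝ)+1) = 1/((n+1 : ℕ) : ℝ) := by push_cast; ring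
  -- direction A : fine ≤ coarse + 6/n
  have dirA : ((n:ℝ)+1) * (∑ k : Fin (n+1), Fg a b (n+1) (k : ℕ) * Fg c d (n+1) ((σ' k : ℕ)))
      ≤ (n:ℝ) * (∑ m : Fin n, Fg a b n (m : ℕ) * Fg c d n ((σ m : ℕ))) + 6/n := by
    rw [Fin.sum_univ_succAbove (fun k => Fg a b (n+1) (k : ℕ) * Fg c d (n+1) ((σ' k : ℕ))) i]
    simp only [e1, e2]
    rw [mul_add]
    have t1 : ((n:ℝ)+1) * (Fg a b (n+1) (i : ℕ) * Fg c d (n+1) (j : ℕ)) ≤ 1/n := by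
      have f1 := Fg_le hN1 a b (i : ℕ)
      have f2 := Fg_le hN1 c d (j : ℕ)
      have f0 := Fg_nonneg c d (n+1) (j : ℕ)
      calc ((n:ℝ)+1) * (Fg a b (n+1) (i : ℕ) * Fg c d (n+1) (j : ℕ))
          ≤ ((n:ℝ)+1) * ((1/((n+1:ℕ):ℝ)) * (1/((n+1:ℕ):ℝ))) :=
            mul_le_mul_of_nonneg_left (mul_le_mul f1 f2 f0 (by positivity)) (by positivity)
        _ = 1/((n:ℝ)+1) := by push_cast; field_simp
        _ ≤ 1/(n:ℝ) := one_div_le_one_div_of_le hnR (by linarith)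
    have t2 : ((n:ℝ)+1) * (∑ m : Fin n, Fg a b (n+1) ((i.succAbove m : Fin (n+1)) : ℕ)
          * Fg c d (n+1) ((j.succAbove (σ m) : Fin (n+1)) : ℕ))
        ≤ (n:ℝ) * ∑ m : Fin n, Fg (a - 1/n) (b + 1/n) n (m : ℕ)
          * Fg (c - 1/n) (d + 1/n) n ((σ m : ℕ)) := by
      rw [Finset.mul_sum, Finset.mul_sum]
      apply Finset.sum_le_sum
      intro m _
      exact prod_step hnR (Fg_nonneg _ _ _ _) (Fg_nonneg _ _ _ _) (Fg_nonneg _ _ _ _)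
        (Fg_nonneg _ _ _ _)
        (K2 hn ha0 ha1 hb0 hb1 (succAbove_coe i m))
        (K2 hn hc0 hc1 hd0 hd1 (succAbove_coe j (σ m)))
    have t3 : ∑ m : Fin n, Fg (a - 1/n) (b + 1/n) n (m : ℕ)
          * Fg (c - 1/n) (d + 1/n) n ((σ m : ℕ))
        ≤ (∑ m : Fin n, Fg a b n (m : ℕ) * Fg c d n ((σ m : ℕ)))
          + (1/n) * (2/n) + (1/n) * (2/n) :=
      dir_aux σ _ _ _ _ (by positivity)
        (fun m => Fg_mono (by linarith) (by linarith) n (m : ℕ))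
        (fun m => Fg_mono (by linarith) (by linarith) n (m : ℕ))
        (fun m => Fg_le hn a b (m : ℕ))
        (fun m => Fg_le hn (c - 1/n) (d + 1/n) (m : ℕ))
        hSF hSG
    have hfs : (n:ℝ) * ((1:ℝ)/n * (2/n)) = 2/n := by field_simp
    have t4 : (n:ℝ) * (∑ m : Fin n, Fg (a - 1/n) (b + 1/n) n (m : ℕ)
          * Fg (c - 1/n) (d + 1/n) n ((σ m : ℕ)))
        ≤ (n:ℝ) * (∑ m : Fin n, Fg a b n (m : ℕ) * Fg c d n ((σ m : ℕ)))
          + 2/n + 2/n := by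
      have h := mul_le_mul_of_nonneg_left t3 hnR.le
      rw [mul_add, mul_add, hfs] at h
      exact h
    linarith [t1, t2, t4]
  -- trivial bounds
  have hX0 : 0 ≤ (n:ℝ) * (∑ m : Fin n, Fg a b n (m : ℕ) * Fg c d n ((σ m : ℕ))) :=
    mul_nonneg hnR.le (Finset.sum_nonneg fun m _ =>
      mul_nonneg (Fg_nonneg _ _ _ _) (Fg_nonneg _ _ _ _))
  have hY0 : 0 ≤ ((n:ℝ)+1) * (∑ k : Fin (n+1), Fg a b (n+1) (k : ℕ)
      * Fg c d (n+1) ((σ' k : ℕ))) :=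
    mul_nonneg hn1.le (Finset.sum_nonneg fun k _ =>
      mul_nonneg (Fg_nonneg _ _ _ _) (Fg_nonneg _ _ _ _))
  by_cases hn2 : 2 ≤ n
  case neg =>
    -- n = 1 : trivial bound
    have hn1' : n = 1 := by omega
    have hX1 : (n:ℝ) * (∑ m : Fin n, Fg a b n (m : ℕ) * Fg c d n ((σ m : ℕ))) ≤ 1 :=
      trivial_bound hn σ _ _ (fun m => Fg_nonneg _ _ _ _) (fun m => Fg_nonneg _ _ _ _)
        (fun m => Fg_le hn a b (m : ℕ)) (fun m => Fg_le hn c d (m : ℕ))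
    have hY1 : ((n:ℝ)+1) * (∑ k : Fin (n+1), Fg a b (n+1) (k : ℕ)
        * Fg c d (n+1) ((σ' k : ℕ))) ≤ 1 := by
      have h := trivial_bound hN1 σ' (fun k => Fg a b (n+1) (k : ℕ))
        (fun k => Fg c d (n+1) (k : ℕ))
        (fun k => Fg_nonneg _ _ _ _) (fun k => Fg_nonneg _ _ _ _)
        (fun k => Fg_le hN1 a b (k : ℕ)) (fun k => Fg_le hN1 c d (k : ℕ))
      push_cast at h
      exact h
    rw [abs_sub_le_iff]
    have h6 : (1:ℝ) ≤ 6/n := by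
      rw [hn1']; norm_num
    constructor <;> linarith
  -- main case n ≥ 2
  have hn2R : (2:ℝ) ≤ n := by exact_mod_cast hn2
  have dirB : (n:ℝ) * (∑ m : Fin n, Fg a b n (m : ℕ) * Fg c d n ((σ m : ℕ)))
      ≤ ((n:ℝ)+1) * (∑ k : Fin (n+1), Fg a b (n+1) (k : ℕ)
        * Fg c d (n+1) ((σ' k : ℕ))) + 6/n := by
    have s1 : (n:ℝ) * (∑ m : Fin n, Fg a b n (m : ℕ) * Fg c d n ((σ m : ℕ)))
        ≤ ((n:ℝ)+1) * ((n:ℝ)+1) / n * (∑ m : Fin n,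
          Fg (a - 1/n) (b + 1/n) (n+1) ((i.succAbove m : Fin (n+1)) : ℕ)
          * Fg (c - 1/n) (d + 1/n) (n+1) ((j.succAbove (σ m) : Fin (n+1)) : ℕ)) := by
      rw [Finset.mul_sum, Finset.mul_sum]
      apply Finset.sum_le_sum
      intro m _
      exact prod_step' hnR (Fg_nonneg _ _ _ _) (Fg_nonneg _ _ _ _) (Fg_nonneg _ _ _ _)
        (Fg_nonneg _ _ _ _)
        (K2' hn ha0 ha1 hb0 hb1 (succAbove_coe i m))
        (K2' hn hc0 hc1 hd0 hd1 (succAbove_coe j (σ m)))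
    have s2 : (∑ m : Fin n,
          Fg (a - 1/n) (b + 1/n) (n+1) ((i.succAbove m : Fin (n+1)) : ℕ)
          * Fg (c - 1/n) (d + 1/n) (n+1) ((j.succAbove (σ m) : Fin (n+1)) : ℕ))
        ≤ ∑ k : Fin (n+1), Fg (a - 1/n) (b + 1/n) (n+1) (k : ℕ)
          * Fg (c - 1/n) (d + 1/n) (n+1) ((σ' k : ℕ)) := by
      rw [Fin.sum_univ_succAbove (fun k => Fg (a - 1/n) (b + 1/n) (n+1) (k : ℕ)
        * Fg (c - 1/n) (d + 1/n) (n+1) ((σ' k : ℕ))) i]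
      simp only [e2]
      exact le_add_of_nonneg_left (mul_nonneg (Fg_nonneg _ _ _ _) (Fg_nonneg _ _ _ _))
    have s3 : (∑ k : Fin (n+1), Fg (a - 1/n) (b + 1/n) (n+1) (k : ℕ)
          * Fg (c - 1/n) (d + 1/n) (n+1) ((σ' k : ℕ)))
        ≤ (∑ k : Fin (n+1), Fg a b (n+1) (k : ℕ) * Fg c d (n+1) ((σ' k : ℕ)))
          + (1/((n:ℝ)+1)) * (2/n) + (1/((n:ℝ)+1)) * (2/n) :=
      dir_aux σ' _ _ _ _ (by positivity)
        (fun k => Fg_mono (by linarith) (by linarith) (n+1) (k : ℕ))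
        (fun k => Fg_mono (by linarith) (by linarith) (n+1) (k : ℕ))
        (fun k => (Fg_le hN1 a b (k : ℕ)).trans (le_of_eq hcast.symm))
        (fun k => (Fg_le hN1 (c - 1/n) (d + 1/n) (k : ℕ)).trans (le_of_eq hcast.symm))
        hSF' hSG'
    have s4 : (∑ k : Fin (n+1), Fg (a - 1/n) (b + 1/n) (n+1) (k : ℕ)
          * Fg (c - 1/n) (d + 1/n) (n+1) ((σ' k : ℕ)))
        ≤ ((b + 1/n) - (a - 1/n)) * (1/((n:ℝ)+1)) := by
      calc (∑ k : Fin (n+1), Fg (a - 1/n) (b + 1/n) (n+1) (k : ℕ)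
            * Fg (c - 1/n) (d + 1/n) (n+1) ((σ' k : ℕ)))
          ≤ ∑ k : Fin (n+1), Fg (a - 1/n) (b + 1/n) (n+1) (k : ℕ) * (1/((n:ℝ)+1)) :=
            Finset.sum_le_sum (fun k _ => mul_le_mul_of_nonneg_left
              ((Fg_le hN1 (c - 1/n) (d + 1/n) ((σ' k : ℕ))).trans (le_of_eq hcast.symm))
              (Fg_nonneg _ _ _ _))
        _ = (∑ k : Fin (n+1), Fg (a - 1/n) (b + 1/n) (n+1) (k : ℕ)) * (1/((n:ℝ)+1)) := by
            rw [← Finset.sum_mul]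
        _ ≤ ((b + 1/n) - (a - 1/n)) * (1/((n:ℝ)+1)) :=
            mul_le_mul_of_nonneg_right hF'bsum (by positivity)
    set Sb := ∑ k : Fin (n+1), Fg (a - 1/n) (b + 1/n) (n+1) (k : ℕ)
      * Fg (c - 1/n) (d + 1/n) (n+1) ((σ' k : ℕ)) with hSb
    set SY := ∑ k : Fin (n+1), Fg a b (n+1) (k : ℕ) * Fg c d (n+1) ((σ' k : ℕ)) with hSYd
    have hSb0 : 0 ≤ Sb := Finset.sum_nonneg fun k _ =>
      mul_nonneg (Fg_nonneg _ _ _ _) (Fg_nonneg _ _ _ _)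
    have hsplit : ((n:ℝ)+1) * ((n:ℝ)+1) / n * Sb = ((n:ℝ)+1) * Sb + (((n:ℝ)+1)/n) * Sb := by
      field_simp
    have u1 : ((n:ℝ)+1) * Sb ≤ ((n:ℝ)+1) * SY + 4/n := by
      have hc1 : ((n:ℝ)+1) * ((1/((n:ℝ)+1)) * (2/n)) = 2/n := by
        field_simp
      have h := mul_le_mul_of_nonneg_left s3 hn1.le
      rw [mul_add, mul_add, hc1] at h
      linarith [h]
    have u2 : (((n:ℝ)+1)/n) * Sb ≤ 1/n + 2/((n:ℝ)*n) := by
      calc (((n:ℝ)+1)/n) * Sb ≤ (((n:ℝ)+1)/n) * (((b + 1/n) - (a - 1/n)) * (1/((n:ℝ)+1))) :=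
            mul_le_mul_of_nonneg_left s4 (by positivity)
        _ = (1/(n:ℝ)) * ((b + 1/n) - (a - 1/n)) := by field_simp
        _ ≤ (1/(n:ℝ)) * (1 + 2/n) := by
            apply mul_le_mul_of_nonneg_left _ (by positivity)
            linarith
        _ = 1/(n:ℝ) + 2/((n:ℝ)*n) := by field_simp
    have hsmall : 2/((n:ℝ)*n) ≤ 1/n := by
      rw [div_le_div_iff₀ (by positivity) hnR]
      nlinarith
    have s12 : (n:ℝ) * (∑ m : Fin n, Fg a b n (m : ℕ) * Fg c d n ((σ m : ℕ)))
        ≤ ((n:ℝ)+1) * ((n:ℝ)+1) / n * Sb :=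
      s1.trans (mul_le_mul_of_nonneg_left s2 (by positivity))
    linarith [s12, u1, u2, hsmall, hsplit]
  rw [abs_sub_le_iff]
  exact ⟨by linarith, by linarith⟩
end
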